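/- (Existence and uniqueness of the mean-field equilibrium fixed point, Theorem 3.) Let S and A be nonempty finite sets, P : S × A → Δ(S) a transition kernel, ζ ∈ (0,1), and define Γ₂(L, π)(s', a') = ζ/(|S|·|A|) + (1 − ζ)·∑_{(s,a)} L(s,a)·P(s' | s, a')·π(a' | s) for L ∈ Δ(S × A) and policies π : S → Δ(A). Let λ : Δ(S × A) → ℝ satisfy |λ(L) − λ(L')| ≤ L_MF·‖L − L'‖₁, and let π̂ : ℝ → (S → Δ(A)) satisfy sup_{s} ‖π̂(x)(· | s) − π̂(y)(· | s)‖₁ ≤ L₁·|x − y| for all x, y ∈ ℝ. Define T : Δ(S × A) → Δ(S × A) by T(L) = Γ₂(L, π̂(λ(L))). If L₁·L_MF·(1 − ζ) + (1 − ζ) < 1, then T is a contraction on Δ(S × A) with respect to the ℓ¹ metric, with contraction constant L₁·L_MF·(1 − ζ) + (1 − ζ), and T admits a unique fixed point L* ∈ Δ(S × A). -/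

import Mathlib

open scoped BigOperators

open scoped ENNReal NNReal

lemma stmt14_gamma_bound {S A : Type*} [Fintype S] [Fintype A] [Nonempty S] [Nonempty A]
    (P : S → A → S → ℝ)
    (hP : ∀ s a, (∀ s', 0 ≤ P s a s') ∧ ∑ s', P s a s' = 1)
    (ζ : ℝ) (hζ1 : ζ ≤ 1)
    (L L' : S × A → ℝ)
    (hL : (∀ p, 0 ≤ L p) ∧ ∑ p, L p = 1)
    (hL' : (∀ p, 0 ≤ L' p) ∧ ∑ p, L' p = 1)
    (π π' : S → A → ℝ)
    (hπ : ∀ s, (∀ a, 0 ≤ π s a) ∧ ∑ a, π s a = 1)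
    (hπ' : ∀ s, (∀ a, 0 ≤ π' s a) ∧ ∑ a, π' s a = 1) :
    ∑ q : S × A,
      |(1 - ζ) * ∑ p : S × A, L p * P p.1 q.2 q.1 * π p.1 q.2 -
        (1 - ζ) * ∑ p : S × A, L' p * P p.1 q.2 q.1 * π' p.1 q.2| ≤
      (1 - ζ) * (∑ p : S × A, |L p - L' p| + ⨆ s : S, ∑ a, |π s a - π' s a|) := by
  have hz : (0:ℝ) ≤ 1 - ζ := by linarith
  set c : S → ℝ := fun s => ∑ a, |π s a - π' s a| with hc
  have hcM : ∀ s, c s ≤ ⨆ s : S, c s := fun s =>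
    le_ciSup (Set.Finite.bddAbove (Set.finite_range c)) s
  have hM0 : 0 ≤ ⨆ s : S, c s := by
    refine le_trans ?_ (hcM (Classical.arbitrary S))
    exact Finset.sum_nonneg fun a _ => abs_nonneg _
  set D : S × A → A → ℝ := fun p a => |L p * π p.1 a - L' p * π' p.1 a| with hD
  have step1 : ∀ q : S × A,
      |(1 - ζ) * ∑ p : S × A, L p * P p.1 q.2 q.1 * π p.1 q.2 -
        (1 - ζ) * ∑ p : S × A, L' p * P p.1 q.2 q.1 * π' p.1 q.2| ≤
      (1 - ζ) * ∑ p : S × A, D p q.2 * P p.1 q.2 q.1 := by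
    intro q
    rw [← mul_sub, abs_mul, abs_of_nonneg hz, ← Finset.sum_sub_distrib]
    refine mul_le_mul_of_nonneg_left ?_ hz
    refine (Finset.abs_sum_le_sum_abs _ _).trans (Finset.sum_le_sum fun p _ => ?_)
    have : L p * P p.1 q.2 q.1 * π p.1 q.2 - L' p * P p.1 q.2 q.1 * π' p.1 q.2
        = (L p * π p.1 q.2 - L' p * π' p.1 q.2) * P p.1 q.2 q.1 := by ring
    rw [this, abs_mul, abs_of_nonneg ((hP p.1 q.2).1 q.1)]
  calc ∑ q : S × A,
      |(1 - ζ) * ∑ p : S × A, L p * P p.1 q.2 q.1 * π p.1 q.2 -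
        (1 - ζ) * ∑ p : S × A, L' p * P p.1 q.2 q.1 * π' p.1 q.2|
      ≤ ∑ q : S × A, (1 - ζ) * ∑ p : S × A, D p q.2 * P p.1 q.2 q.1 :=
        Finset.sum_le_sum fun q _ => step1 q
    _ = (1 - ζ) * ∑ a : A, ∑ p : S × A, D p a := by
        rw [← Finset.mul_sum, Fintype.sum_prod_type]
        congr 1
        rw [Finset.sum_comm]
        refine Finset.sum_congr rfl fun a _ => ?_
        rw [Finset.sum_comm]
        refine Finset.sum_congr rfl fun p _ => ?_
        show ∑ x : S, D p a * P p.1 a x = D p a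
        rw [← Finset.mul_sum, (hP p.1 a).2, mul_one]
    _ ≤ (1 - ζ) * (∑ p : S × A, |L p - L' p| + ⨆ s : S, c s) := by
        refine mul_le_mul_of_nonneg_left ?_ hz
        have expand : ∀ a : A, ∀ p : S × A,
            D p a ≤ |L p - L' p| * π p.1 a + L' p * |π p.1 a - π' p.1 a| := by
          intro a p
          have : L p * π p.1 a - L' p * π' p.1 a
              = (L p - L' p) * π p.1 a + L' p * (π p.1 a - π' p.1 a) := by ring
          rw [hD]; dsimp only
          rw [this]
          refine (abs_add_le _ _).trans ?_
          rw [abs_mul, abs_mul, abs_of_nonneg ((hπ p.1).1 a), abs_of_nonneg (hL'.1 p)]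
        calc ∑ a : A, ∑ p : S × A, D p a
            ≤ ∑ a : A, ∑ p : S × A,
              (|L p - L' p| * π p.1 a + L' p * |π p.1 a - π' p.1 a|) :=
              Finset.sum_le_sum fun a _ => Finset.sum_le_sum fun p _ => expand a p
          _ = ∑ p : S × A, (|L p - L' p| * ∑ a, π p.1 a + L' p * c p.1) := by
              rw [Finset.sum_comm]
              refine Finset.sum_congr rfl fun p _ => ?_
              rw [Finset.sum_add_distrib, ← Finset.mul_sum, ← Finset.mul_sum]
          _ ≤ ∑ p : S × A, (|L p - L' p| + L' p * (⨆ s : S, c s)) := by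
              refine Finset.sum_le_sum fun p _ => ?_
              rw [(hπ p.1).2, mul_one]
              exact add_le_add_right (mul_le_mul_of_nonneg_left (hcM p.1) (hL'.1 p)) _
          _ = ∑ p : S × A, |L p - L' p| + ⨆ s : S, c s := by
              rw [Finset.sum_add_distrib, ← Finset.sum_mul, hL'.2, one_mul]

lemma stmt14_exists_unique {ι : Type*} [Fintype ι] [Nonempty ι]
    (T : (ι → ℝ) → ι → ℝ) (k : ℝ) (hk : k < 1)
    (hinv : ∀ L : ι → ℝ, ((∀ i, 0 ≤ L i) ∧ ∑ i, L i = 1) →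
      ((∀ i, 0 ≤ T L i) ∧ ∑ i, T L i = 1))
    (hco : ∀ L L' : ι → ℝ, ((∀ i, 0 ≤ L i) ∧ ∑ i, L i = 1) →
      ((∀ i, 0 ≤ L' i) ∧ ∑ i, L' i = 1) →
      ∑ i, |T L i - T L' i| ≤ k * ∑ i, |L i - L' i|) :
    ∃! L : ι → ℝ, ((∀ i, 0 ≤ L i) ∧ ∑ i, L i = 1) ∧ T L = L := by
  classical
  have hdist : ∀ x y : PiLp 1 (fun _ : ι => ℝ), dist x y = ∑ i, |x i - y i| := by
    intro x y
    rw [PiLp.dist_eq_sum (show 0 < (1 : ℝ≥0∞).toReal by norm_num)]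
    simp [Real.dist_eq, ENNReal.toReal_one, Real.rpow_one]
  let T' : PiLp 1 (fun _ : ι => ℝ) → PiLp 1 (fun _ : ι => ℝ) := fun x => WithLp.toLp 1 (T x)
  have hT'app : ∀ (x : PiLp 1 (fun _ : ι => ℝ)) (i : ι), T' x i = T x i := fun _ _ => rfl
  let s : Set (PiLp 1 (fun _ : ι => ℝ)) := {x | (∀ i, 0 ≤ x i) ∧ ∑ i, x i = 1}
  have hmem : ∀ x : PiLp 1 (fun _ : ι => ℝ),
      x ∈ s ↔ ((∀ i, 0 ≤ x i) ∧ ∑ i, x i = 1) := fun x => Iff.rfl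
  have hev : ∀ i, Continuous (fun x : PiLp 1 (fun _ : ι => ℝ) => x i) := fun i =>
    (continuous_apply i).comp (PiLp.continuous_ofLp 1 (fun _ : ι => ℝ))
  have hclosed : IsClosed s := by
    have h1 : {x : PiLp 1 (fun _ : ι => ℝ) | ∀ i, 0 ≤ x i}
        = ⋂ i, {x : PiLp 1 (fun _ : ι => ℝ) | 0 ≤ x i} := by
      ext x; simp [Set.mem_iInter]
    have h1' : IsClosed {x : PiLp 1 (fun _ : ι => ℝ) | ∀ i, 0 ≤ x i} := by
      rw [h1]; exact isClosed_iInter fun i => isClosed_le continuous_const (hev i)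
    have h2 : IsClosed {x : PiLp 1 (fun _ : ι => ℝ) | ∑ i, x i = 1} :=
      isClosed_eq (continuous_finset_sum _ fun i _ => hev i) continuous_const
    have hss : s = {x : PiLp 1 (fun _ : ι => ℝ) | ∀ i, 0 ≤ x i}
        ∩ {x : PiLp 1 (fun _ : ι => ℝ) | ∑ i, x i = 1} := by
      ext x; simp [s, Set.mem_setOf_eq, Set.mem_inter_iff]
    rw [hss]; exact h1'.inter h2
  have hsf : Set.MapsTo T' s s := fun x hx => hinv x hx
  set K : ℝ≥0 := ⟨max k 0, le_max_right _ _⟩ with hK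
  have hK1 : K < 1 := by
    rw [← NNReal.coe_lt_coe]
    exact max_lt hk zero_lt_one
  have hCW : ContractingWith K (hsf.restrict T' s s) := by
    refine ⟨hK1, LipschitzWith.of_dist_le_mul fun x y => ?_⟩
    show dist (T' x.1) (T' y.1) ≤ (K : ℝ) * dist x.1 y.1
    rw [hdist, hdist]
    calc ∑ i, |T' x.1 i - T' y.1 i| ≤ k * ∑ i, |x.1 i - y.1 i| :=
          hco x.1 y.1 x.2 y.2
      _ ≤ (K : ℝ) * ∑ i, |x.1 i - y.1 i| :=
          mul_le_mul_of_nonneg_right (le_max_left _ _)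
            (Finset.sum_nonneg fun i _ => abs_nonneg _)
  have hx0 : WithLp.toLp 1 (fun _ : ι => (Fintype.card ι : ℝ)⁻¹) ∈ s := by
    constructor
    · intro i
      positivity
    · rw [Finset.sum_const, Finset.card_univ, nsmul_eq_mul, mul_inv_cancel₀]
      exact_mod_cast Fintype.card_ne_zero
  obtain ⟨y, hys, hfy, -, -⟩ := ContractingWith.exists_fixedPoint' hclosed.isComplete
    hsf hCW hx0 (edist_ne_top _ _)
  have hyfix : T y = y := congrArg WithLp.ofLp hfy
  refine ⟨y, ⟨hys, hyfix⟩, ?_⟩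
  rintro L ⟨hLs, hLfix⟩
  by_contra hne
  have hle := hco L y hLs hys
  rw [hLfix, hyfix] at hle
  have hpos : 0 < ∑ i, |L i - (y : ι → ℝ) i| := by
    rcases lt_or_eq_of_le (Finset.sum_nonneg fun i _ =>
      abs_nonneg (L i - (y : ι → ℝ) i)) with h | h
    · exact h
    · exfalso
      apply hne
      funext i
      have h0 := (Finset.sum_eq_zero_iff_of_nonneg fun i _ =>
        abs_nonneg (L i - (y : ι → ℝ) i)).mp h.symm i (Finset.mem_univ i)
      have : L i - (y : ι → ℝ) i = 0 := abs_eq_zero.mp h0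
      linarith
  nlinarith [hle, hpos]

/-- Theorem 3, existence and uniqueness of the mean-field equilibrium
fixed point: with the consistency operator
`Γ₂(L,π)(s',a') = ζ/(|S||A|) + (1-ζ) ∑_{(s,a)} L(s,a) P(s'|s,a') π(a'|s)`, an
`L_MF`-Lipschitz price map `λ` on `Δ(S×A)`, an `L₁`-Lipschitz policy map `π̂`, and
`T(L) = Γ₂(L, π̂(λ(L)))`, if `L₁ L_MF (1-ζ) + (1-ζ) < 1` then `T` is a contraction on
`Δ(S×A)` in the ℓ¹ metric with constant `L₁ L_MF (1-ζ) + (1-ζ)`, and `T` admits a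
unique fixed point in `Δ(S×A)`. -/
theorem stmt14 {S A : Type*} [Fintype S] [Fintype A] [Nonempty S] [Nonempty A]
    (P : S → A → S → ℝ)
    (hP : ∀ s a, (∀ s', 0 ≤ P s a s') ∧ ∑ s', P s a s' = 1)
    (ζ : ℝ) (hζ : ζ ∈ Set.Ioo (0 : ℝ) 1)
    (Γ₂ : (S × A → ℝ) → (S → A → ℝ) → S × A → ℝ)
    (hΓ₂ : ∀ (L : S × A → ℝ) (π : S → A → ℝ) (q : S × A),
      Γ₂ L π q = ζ / ((Fintype.card S : ℝ) * (Fintype.card A : ℝ)) +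
        (1 - ζ) * ∑ p : S × A, L p * P p.1 q.2 q.1 * π p.1 q.2)
    (lmp : (S × A → ℝ) → ℝ) (LMF : ℝ)
    (hlmp : ∀ L L' : S × A → ℝ,
      ((∀ p, 0 ≤ L p) ∧ ∑ p, L p = 1) → ((∀ p, 0 ≤ L' p) ∧ ∑ p, L' p = 1) →
      |lmp L - lmp L'| ≤ LMF * ∑ p : S × A, |L p - L' p|)
    (pihat : ℝ → S → A → ℝ)
    (hpihat_dist : ∀ (x : ℝ) (s : S), (∀ a, 0 ≤ pihat x s a) ∧ ∑ a, pihat x s a = 1)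
    (L₁ : ℝ)
    (hpihat_lip : ∀ x y : ℝ,
      (⨆ s : S, ∑ a, |pihat x s a - pihat y s a|) ≤ L₁ * |x - y|)
    (T : (S × A → ℝ) → S × A → ℝ)
    (hT : ∀ L : S × A → ℝ, T L = Γ₂ L (pihat (lmp L)))
    (hcontr : L₁ * LMF * (1 - ζ) + (1 - ζ) < 1) :
    (∀ L L' : S × A → ℝ,
      ((∀ p, 0 ≤ L p) ∧ ∑ p, L p = 1) → ((∀ p, 0 ≤ L' p) ∧ ∑ p, L' p = 1) →
      ∑ q : S × A, |T L q - T L' q| ≤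
        (L₁ * LMF * (1 - ζ) + (1 - ζ)) * ∑ q : S × A, |L q - L' q|) ∧
    (∀ L : S × A → ℝ, ((∀ p, 0 ≤ L p) ∧ ∑ p, L p = 1) →
      ((∀ q, 0 ≤ T L q) ∧ ∑ q, T L q = 1)) ∧
    (∃! L : S × A → ℝ, ((∀ p, 0 ≤ L p) ∧ ∑ p, L p = 1) ∧ T L = L) := by
  obtain ⟨hζ0, hζ1⟩ := hζ
  have hz : (0:ℝ) ≤ 1 - ζ := by linarith
  have hL₁ : 0 ≤ L₁ := by
    have h := hpihat_lip 0 1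
    have h0 : (0:ℝ) ≤ ⨆ s : S, ∑ a, |pihat 0 s a - pihat 1 s a| := by
      have h0a : (0:ℝ) ≤ ∑ a, |pihat 0 (Classical.arbitrary S) a - pihat 1 (Classical.arbitrary S) a| :=
        Finset.sum_nonneg fun a _ => abs_nonneg _
      exact le_trans h0a (le_ciSup (Set.Finite.bddAbove
        (Set.finite_range (fun s : S => ∑ a, |pihat 0 s a - pihat 1 s a|)))
        (Classical.arbitrary S))
    have := le_trans h0 h
    simpa using this
  have key : ∀ L L' : S × A → ℝ,
      ((∀ p, 0 ≤ L p) ∧ ∑ p, L p = 1) → ((∀ p, 0 ≤ L' p) ∧ ∑ p, L' p = 1) →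
      ∑ q : S × A, |T L q - T L' q| ≤
        (L₁ * LMF * (1 - ζ) + (1 - ζ)) * ∑ q : S × A, |L q - L' q| := by
    intro L L' hL hL'
    have hdiff : ∀ q : S × A, T L q - T L' q =
        ((1 - ζ) * ∑ p : S × A, L p * P p.1 q.2 q.1 * pihat (lmp L) p.1 q.2) -
        ((1 - ζ) * ∑ p : S × A, L' p * P p.1 q.2 q.1 * pihat (lmp L') p.1 q.2) := by
      intro q
      rw [hT, hT, hΓ₂, hΓ₂]
      ring
    have hb := stmt14_gamma_bound P hP ζ (le_of_lt hζ1) L L' hL hL'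
      (pihat (lmp L)) (pihat (lmp L')) (hpihat_dist (lmp L)) (hpihat_dist (lmp L'))
    have hM : (⨆ s : S, ∑ a, |pihat (lmp L) s a - pihat (lmp L') s a|) ≤
        L₁ * (LMF * ∑ p : S × A, |L p - L' p|) :=
      le_trans (hpihat_lip (lmp L) (lmp L'))
        (mul_le_mul_of_nonneg_left (hlmp L L' hL hL') hL₁)
    calc ∑ q : S × A, |T L q - T L' q|
        = ∑ q : S × A,
          |((1 - ζ) * ∑ p : S × A, L p * P p.1 q.2 q.1 * pihat (lmp L) p.1 q.2) -
            ((1 - ζ) * ∑ p : S × A, L' p * P p.1 q.2 q.1 * pihat (lmp L') p.1 q.2)| := by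
          exact Finset.sum_congr rfl fun q _ => by rw [hdiff q]
      _ ≤ (1 - ζ) * (∑ p : S × A, |L p - L' p| +
            ⨆ s : S, ∑ a, |pihat (lmp L) s a - pihat (lmp L') s a|) := hb
      _ ≤ (1 - ζ) * (∑ p : S × A, |L p - L' p| +
            L₁ * (LMF * ∑ p : S × A, |L p - L' p|)) :=
          mul_le_mul_of_nonneg_left (add_le_add_right hM _) hz
      _ = (L₁ * LMF * (1 - ζ) + (1 - ζ)) * ∑ q : S × A, |L q - L' q| := by ring
  have hinv : ∀ L : S × A → ℝ, ((∀ p, 0 ≤ L p) ∧ ∑ p, L p = 1) →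
      ((∀ q, 0 ≤ T L q) ∧ ∑ q, T L q = 1) := by
    intro L hL
    have hcS : (0:ℝ) < (Fintype.card S : ℝ) := by exact_mod_cast Fintype.card_pos
    have hcA : (0:ℝ) < (Fintype.card A : ℝ) := by exact_mod_cast Fintype.card_pos
    constructor
    · intro q
      rw [hT, hΓ₂]
      have h1 : 0 ≤ ζ / ((Fintype.card S : ℝ) * (Fintype.card A : ℝ)) := by positivity
      have h2 : 0 ≤ ∑ p : S × A, L p * P p.1 q.2 q.1 * pihat (lmp L) p.1 q.2 :=
        Finset.sum_nonneg fun p _ => mul_nonneg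
          (mul_nonneg (hL.1 p) ((hP p.1 q.2).1 q.1)) ((hpihat_dist (lmp L) p.1).1 q.2)
      nlinarith
    · rw [hT]
      have : ∑ q : S × A, Γ₂ L (pihat (lmp L)) q =
          ∑ q : S × A, (ζ / ((Fintype.card S : ℝ) * (Fintype.card A : ℝ)) +
            (1 - ζ) * ∑ p : S × A, L p * P p.1 q.2 q.1 * pihat (lmp L) p.1 q.2) :=
        Finset.sum_congr rfl fun q _ => hΓ₂ L (pihat (lmp L)) q
      rw [this, Finset.sum_add_distrib, ← Finset.mul_sum]
      have hconst : ∑ _q : S × A, ζ / ((Fintype.card S : ℝ) * (Fintype.card A : ℝ)) = ζ := by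
        rw [Finset.sum_const, Finset.card_univ, Fintype.card_prod, nsmul_eq_mul]
        push_cast
        field_simp
      have hsum : ∑ q : S × A, ∑ p : S × A,
          L p * P p.1 q.2 q.1 * pihat (lmp L) p.1 q.2 = 1 := by
        rw [Fintype.sum_prod_type, Finset.sum_comm]
        have h1 : ∀ a : A, ∑ s' : S, ∑ p : S × A,
            L p * P p.1 a s' * pihat (lmp L) p.1 a
            = ∑ p : S × A, L p * pihat (lmp L) p.1 a := by
          intro a
          rw [Finset.sum_comm]
          refine Finset.sum_congr rfl fun p _ => ?_
          have : ∑ s' : S, L p * P p.1 a s' * pihat (lmp L) p.1 a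
              = (L p * pihat (lmp L) p.1 a) * ∑ s' : S, P p.1 a s' := by
            rw [Finset.mul_sum]; exact Finset.sum_congr rfl fun s' _ => by ring
          rw [this, (hP p.1 a).2, mul_one]
        calc ∑ a : A, ∑ s' : S, ∑ p : S × A, L p * P p.1 a s' * pihat (lmp L) p.1 a
            = ∑ a : A, ∑ p : S × A, L p * pihat (lmp L) p.1 a :=
              Finset.sum_congr rfl fun a _ => h1 a
          _ = ∑ p : S × A, L p * ∑ a : A, pihat (lmp L) p.1 a := by
              rw [Finset.sum_comm]
              exact Finset.sum_congr rfl fun p _ => by rw [Finset.mul_sum]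
          _ = 1 := by
              have hh : ∑ p : S × A, L p * ∑ a : A, pihat (lmp L) p.1 a
                  = ∑ p : S × A, L p :=
                Finset.sum_congr rfl fun p _ => by
                  rw [(hpihat_dist (lmp L) p.1).2, mul_one]
              rw [hh, hL.2]
      rw [hconst, hsum, mul_one]
      ring
  exact ⟨key, hinv, stmt14_exists_unique T _ hcontr hinv key⟩
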